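/- Let d > 1, β > β(d), and let h⁺ be the positive fixed point of x ↦ d·φ(x). Suppose 0 < h^t ≤ h⁺. Define sequences by a₀ ≥ h⁺, b₀ ≤ 0, and for even-to-even double steps a_{j+2} = h^t + d·φ(−h^t + d·φ(a_j)), b_{j+2} = h^t + d·φ(−h^t + d·φ(b_j)). Then a_j ≥ h⁺ and b_j ≤ 0 for all even j. -/

import Mathlib

/-- The inverse hyperbolic tangent, arctanh x = (1/2)·log((1+x)/(1-x)). -/
noncomputable def artanh (x : ℝ) : ℝ := (1 / 2) * Real.log ((1 + x) / (1 - x))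

/-- The one-step Ising tree recursion function φ(x) = arctanh(tanh β · tanh x). -/
noncomputable def phi (β x : ℝ) : ℝ := artanh (Real.tanh β * Real.tanh x)

lemma tanh_formula (x : ℝ) : Real.tanh x = 1 - 2 / (Real.exp (2*x) + 1) := by
  have h1 : Real.exp x ≠ 0 := (Real.exp_pos x).ne'
  rw [Real.tanh_eq_sinh_div_cosh, Real.sinh_eq, Real.cosh_eq]
  have he : Real.exp (2*x) = Real.exp x * Real.exp x := by
    rw [← Real.exp_add]; ring_nf
  have h3 : Real.exp x + Real.exp (-x) > 0 := by positivity
  rw [Real.exp_neg] at *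
  field_simp
  rw [he]; ring

lemma tanh_lt_one' (x : ℝ) : Real.tanh x < 1 := by
  rw [tanh_formula]
  have : 0 < Real.exp (2*x) + 1 := by positivity
  have : 0 < 2 / (Real.exp (2*x) + 1) := by positivity
  linarith

lemma neg_one_lt_tanh (x : ℝ) : -1 < Real.tanh x := by
  rw [tanh_formula]
  have h : 0 < Real.exp (2*x) := Real.exp_pos _
  have hx : (0:ℝ) < Real.exp (2*x) + 1 := by positivity
  have : 2 / (Real.exp (2*x) + 1) < 2 := by
    rw [div_lt_iff₀ hx]; nlinarith
  linarith

lemma tanh_strictMono : StrictMono Real.tanh := by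
  intro x y hxy
  rw [tanh_formula, tanh_formula]
  have hx : (0:ℝ) < Real.exp (2*x) + 1 := by positivity
  have hy : (0:ℝ) < Real.exp (2*y) + 1 := by positivity
  have : Real.exp (2*x) < Real.exp (2*y) := Real.exp_lt_exp.2 (by linarith)
  have : 2 / (Real.exp (2*y) + 1) < 2 / (Real.exp (2*x) + 1) :=
    div_lt_div_of_pos_left (by norm_num) hx (by linarith)
  linarith

lemma tanh_mono : Monotone Real.tanh := tanh_strictMono.monotone

lemma tanh_nonneg' {x : ℝ} (h : 0 ≤ x) : 0 ≤ Real.tanh x := by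
  simpa using tanh_mono h

lemma artanh_zero : artanh 0 = 0 := by simp [artanh]

lemma artanh_neg {u : ℝ} (h1 : -1 < u) (h2 : u < 1) : artanh (-u) = -artanh u := by
  unfold artanh
  have hp : (0:ℝ) < 1 + u := by linarith
  have hm : (0:ℝ) < 1 - u := by linarith
  have : (1 + -u) / (1 - -u) = ((1 + u) / (1 - u))⁻¹ := by
    rw [inv_div]; ring_nf
  rw [this, Real.log_inv]; ring

lemma artanh_le_artanh {u v : ℝ} (h1 : -1 < u) (h2 : v < 1) (h : u ≤ v) :
    artanh u ≤ artanh v := by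
  unfold artanh
  have hp : (0:ℝ) < 1 + u := by linarith
  have hm : (0:ℝ) < 1 - v := by linarith
  have hq : (0:ℝ) < (1 + u) / (1 - u) := div_pos hp (by linarith)
  have hle : (1 + u) / (1 - u) ≤ (1 + v) / (1 - v) := by
    rw [div_le_div_iff₀ (by linarith) hm]; nlinarith
  have := Real.log_le_log hq hle
  linarith

lemma abs_tanh_lt_one (x : ℝ) : |Real.tanh x| < 1 :=
  abs_lt.2 ⟨neg_one_lt_tanh x, tanh_lt_one' x⟩

lemma mul_tanh_lt_one (β x : ℝ) : |Real.tanh β * Real.tanh x| < 1 := by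
  rw [abs_mul]
  calc |Real.tanh β| * |Real.tanh x| ≤ |Real.tanh β| * 1 :=
        mul_le_mul_of_nonneg_left (abs_tanh_lt_one x).le (abs_nonneg _)
    _ = |Real.tanh β| := mul_one _
    _ < 1 := abs_tanh_lt_one β

lemma phi_mono (β : ℝ) (hβ : 0 ≤ Real.tanh β) : Monotone (phi β) := by
  intro x y hxy
  unfold phi
  have h1 := mul_tanh_lt_one β x
  have h2 := mul_tanh_lt_one β y
  exact artanh_le_artanh (abs_lt.1 h1).1 (abs_lt.1 h2).2
    (mul_le_mul_of_nonneg_left (tanh_mono hxy) hβ)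

lemma phi_zero (β : ℝ) : phi β 0 = 0 := by
  simp [phi, Real.tanh_zero, artanh_zero]

lemma phi_neg (β x : ℝ) : phi β (-x) = -phi β x := by
  unfold phi
  rw [Real.tanh_neg, mul_neg]
  have := mul_tanh_lt_one β x
  exact artanh_neg (abs_lt.1 this).1 (abs_lt.1 this).2

lemma hasDerivAt_tanh (x : ℝ) : HasDerivAt Real.tanh (1 - Real.tanh x ^ 2) x := by
  have hs : (0:ℝ) < Real.exp (2*x) + 1 := by positivity
  have he : HasDerivAt (fun x : ℝ => Real.exp (2*x) + 1) (2 * Real.exp (2*x)) x := by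
    have : HasDerivAt (fun x : ℝ => 2*x) 2 x := by
      simpa using (hasDerivAt_id x).const_mul 2
    simpa [mul_comm] using (Real.hasDerivAt_exp (2*x)).comp x this |>.add_const 1
  have hd : HasDerivAt (fun x : ℝ => 1 - 2 / (Real.exp (2*x) + 1))
      (4 * Real.exp (2*x) / (Real.exp (2*x) + 1)^2) x := by
    have := ((hasDerivAt_const x (2:ℝ)).div he hs.ne').const_sub 1
    convert this using 1
    all_goals try rfl
    field_simp
    ring
  have heq : (fun x : ℝ => 1 - 2 / (Real.exp (2*x) + 1)) = Real.tanh := by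
    funext y; rw [tanh_formula]
  rw [heq] at hd
  convert hd using 1
  rw [tanh_formula]
  field_simp
  ring

lemma hasDerivAt_artanh {u : ℝ} (h1 : -1 < u) (h2 : u < 1) :
    HasDerivAt artanh (1 / (1 - u^2)) u := by
  have hp : (0:ℝ) < 1 + u := by linarith
  have hm : (0:ℝ) < 1 - u := by linarith
  have hq : HasDerivAt (fun u : ℝ => (1+u)/(1-u)) (2/(1-u)^2) u := by
    have ha : HasDerivAt (fun u : ℝ => 1 + u) 1 u := by
      simpa using (hasDerivAt_id u).const_add 1
    have hb : HasDerivAt (fun u : ℝ => 1 - u) (-1) u := by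
      simpa using (hasDerivAt_id u).const_sub 1
    convert ha.div hb hm.ne' using 1
    all_goals try rfl
    field_simp
    ring
  have hpos : (0:ℝ) < (1+u)/(1-u) := div_pos hp hm
  have := (hq.log hpos.ne').const_mul (1/2 : ℝ)
  have h3u : (0:ℝ) < 1 - u^2 := by nlinarith
  have hval : 1 / (1 - u^2) = 1/2 * (2/(1-u)^2 / ((1+u)/(1-u))) := by
    have h4u : (1:ℝ) - u^2 ≠ 0 := h3u.ne'
    have h5u : (1:ℝ) - u ≠ 0 := hm.ne'
    have h6u : (1:ℝ) + u ≠ 0 := hp.ne'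
    field_simp
    ring
  rw [hval]
  exact this

lemma hasDerivAt_phi (β x : ℝ) :
    HasDerivAt (phi β)
      (Real.tanh β * (1 - Real.tanh x ^ 2) / (1 - (Real.tanh β * Real.tanh x)^2)) x := by
  have hb := abs_lt.1 (mul_tanh_lt_one β x)
  have hinner : HasDerivAt (fun x => Real.tanh β * Real.tanh x)
      (Real.tanh β * (1 - Real.tanh x ^ 2)) x := (hasDerivAt_tanh x).const_mul _
  have houter := hasDerivAt_artanh hb.1 hb.2
  have h := houter.comp x hinner
  have hval : Real.tanh β * (1 - Real.tanh x ^ 2) / (1 - (Real.tanh β * Real.tanh x)^2)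
      = 1 / (1 - (Real.tanh β * Real.tanh x)^2) * (Real.tanh β * (1 - Real.tanh x ^ 2)) := by
    ring
  rw [hval]
  exact h

lemma phi_concave (β : ℝ) (hβ : 0 ≤ Real.tanh β) : ConcaveOn ℝ (Set.Ici 0) (phi β) := by
  have hdiff : Differentiable ℝ (phi β) := fun x => (hasDerivAt_phi β x).differentiableAt
  apply AntitoneOn.concaveOn_of_deriv (convex_Ici 0) hdiff.continuous.continuousOn
    (hdiff.differentiableOn)
  rw [interior_Ici]
  intro x hx y hy hxy
  rw [(hasDerivAt_phi β x).deriv, (hasDerivAt_phi β y).deriv]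
  set t := Real.tanh β with ht
  set p := Real.tanh x with hpd
  set q := Real.tanh y with hqd
  have hpq : p ≤ q := tanh_mono hxy
  have hp0 : 0 ≤ p := tanh_nonneg' (le_of_lt hx)
  have hp1 : p < 1 := tanh_lt_one' x
  have hq1 : q < 1 := tanh_lt_one' y
  have ht1 : t < 1 := tanh_lt_one' β
  have hdx : 0 < 1 - (t*p)^2 := by nlinarith [sq_abs (t*p), mul_tanh_lt_one β x, abs_nonneg (t*p)]
  have hdy : 0 < 1 - (t*q)^2 := by nlinarith [sq_abs (t*q), mul_tanh_lt_one β y, abs_nonneg (t*q)]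
  rw [div_le_div_iff₀ hdy hdx]
  have hq0 : 0 ≤ q := le_trans hp0 hpq
  have key : 0 ≤ t * ((q^2 - p^2) * (1 - t^2)) :=
    mul_nonneg hβ (mul_nonneg (by nlinarith) (by nlinarith))
  nlinarith [key]

lemma phi_chord (β d hp : ℝ) (hβ : 0 ≤ Real.tanh β) (hd : 0 < d) (hp_pos : 0 < hp)
    (hp_fix : d * phi β hp = hp) {x : ℝ} (hx0 : 0 ≤ x) (hxp : x ≤ hp) :
    x ≤ d * phi β x := by
  have hc := phi_concave β hβ
  have h0 : (0:ℝ) ∈ Set.Ici (0:ℝ) := Set.mem_Ici.2 le_rfl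
  have hh : hp ∈ Set.Ici (0:ℝ) := Set.mem_Ici.2 hp_pos.le
  have ha : 0 ≤ 1 - x / hp := by
    rw [sub_nonneg, div_le_one hp_pos]; exact hxp
  have hb : 0 ≤ x / hp := div_nonneg hx0 hp_pos.le
  have hsum : (1 - x/hp) + x/hp = 1 := by ring
  have := hc.2 h0 hh ha hb hsum
  have hx' : (1 - x/hp) • (0:ℝ) + (x/hp) • hp = x := by
    simp only [smul_eq_mul, mul_zero, zero_add]
    field_simp
  rw [hx', phi_zero] at this
  have hφhp : phi β hp = hp / d := by
    field_simp [hd.ne'] at hp_fix ⊢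
    linarith
  rw [hφhp] at this
  simp only [smul_eq_mul, mul_zero, zero_add] at this
  have : x / d ≤ phi β x := by
    have hxx : x / d = (x/hp) * (hp/d) := by
      rw [div_mul_div_comm, mul_comm x hp, mul_div_mul_left _ _ hp_pos.ne']
    rw [hxx]; exact this
  calc x = d * (x / d) := by field_simp
    _ ≤ d * phi β x := mul_le_mul_of_nonneg_left this hd.le

theorem stmt_12 (β d ht : ℝ) (hd : 1 < d) (hw : 1 < d * Real.tanh β)
    (hp : ℝ) (hp_pos : 0 < hp) (hp_fix : d * phi β hp = hp)
    (hht : 0 < ht) (hth : ht ≤ hp)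
    (a b : ℕ → ℝ) (ha0 : hp ≤ a 0) (hb0 : b 0 ≤ 0)
    (ha : ∀ j, a (j + 2) = ht + d * phi β (-ht + d * phi β (a j)))
    (hb : ∀ j, b (j + 2) = ht + d * phi β (-ht + d * phi β (b j))) :
    ∀ j, Even j → hp ≤ a j ∧ b j ≤ 0 := by
  have hd0 : (0:ℝ) < d := by linarith
  have hβ : 0 ≤ Real.tanh β := by
    by_contra h
    push_neg at h
    nlinarith
  have mono := phi_mono β hβ
  have key : ∀ x : ℝ, 0 ≤ x → x ≤ hp → x ≤ d * phi β x := fun x hx0 hxp =>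
    phi_chord β d hp hβ hd0 hp_pos hp_fix hx0 hxp
  have hφhp : phi β hp = hp / d := by
    field_simp [hd0.ne'] at hp_fix ⊢
    linarith
  -- step for a
  have step_a : ∀ x : ℝ, hp ≤ x → hp ≤ ht + d * phi β (-ht + d * phi β x) := by
    intro x hx
    have h1 : hp ≤ d * phi β x := by
      have := mono hx
      rw [hφhp] at this
      calc hp = d * (hp / d) := by field_simp
        _ ≤ d * phi β x := mul_le_mul_of_nonneg_left this hd0.le
    have h2 : hp - ht ≤ -ht + d * phi β x := by linarith
    have h3 : phi β (hp - ht) ≤ phi β (-ht + d * phi β x) := mono h2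
    have h4 : hp - ht ≤ d * phi β (hp - ht) := key _ (by linarith) (by linarith)
    have h5 : d * phi β (hp - ht) ≤ d * phi β (-ht + d * phi β x) :=
      mul_le_mul_of_nonneg_left h3 hd0.le
    linarith
  -- step for b
  have step_b : ∀ x : ℝ, x ≤ 0 → ht + d * phi β (-ht + d * phi β x) ≤ 0 := by
    intro x hx
    have h1 : phi β x ≤ 0 := by
      have := mono hx
      rw [phi_zero] at this
      exact this
    have h2 : d * phi β x ≤ 0 := mul_nonpos_of_nonneg_of_nonpos hd0.le h1
    have h3 : -ht + d * phi β x ≤ -ht := by linarith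
    have h4 : phi β (-ht + d * phi β x) ≤ phi β (-ht) := mono h3
    have h5 : phi β (-ht) = -phi β ht := phi_neg β ht
    have h6 : ht ≤ d * phi β ht := key ht hht.le hth
    have h7 : d * phi β (-ht + d * phi β x) ≤ d * phi β (-ht) :=
      mul_le_mul_of_nonneg_left h4 hd0.le
    rw [h5] at h7
    linarith
  have main : ∀ k : ℕ, hp ≤ a (2*k) ∧ b (2*k) ≤ 0 := by
    intro k
    induction k with
    | zero => exact ⟨ha0, hb0⟩
    | succ n ih =>
      have h2 : 2*(n+1) = 2*n + 2 := by ring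
      rw [h2, ha, hb]
      exact ⟨step_a _ ih.1, step_b _ ih.2⟩
  intro j hj
  obtain ⟨k, hk⟩ := hj
  have : j = 2*k := by omega
  rw [this]
  exact main k
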